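/- arXiv:2605.23149 — 6 statements merged into one kernel-verified Lean document; each statement's English description precedes it below -/
import Mathlib

section
/- The equation 1 = θ/sin²θ − cos θ/sin θ has a unique solution θ_max in the open interval (0, π/2). -/
open Real

noncomputable def gg (θ : ℝ) : ℝ := θ - Real.sin θ * Real.cos θ - (Real.sin θ)^2

lemma gg_hasDeriv (θ : ℝ) :
    HasDerivAt gg (2 * Real.sin θ * (Real.sin θ - Real.cos θ)) θ := by
  have h1 : HasDerivAt Real.sin (Real.cos θ) θ := Real.hasDerivAt_sin θ
  have h2 : HasDerivAt Real.cos (-Real.sin θ) θ := Real.hasDerivAt_cos θ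
  have h3 := (hasDerivAt_id θ).sub (h1.mul h2)
  have h4 := h3.sub (h1.pow 2)
  have heq : 2 * Real.sin θ * (Real.sin θ - Real.cos θ) =
      1 - (Real.cos θ * Real.cos θ + Real.sin θ * -Real.sin θ) -
      (2 : ℕ) * Real.sin θ ^ (2 - 1) * Real.cos θ := by
    have hpy := Real.sin_sq_add_cos_sq θ
    push_cast
    nlinarith [hpy]
  exact heq ▸ h4

lemma gg_cont : Continuous gg := by
  unfold gg; continuity

lemma sinlt {θ : ℝ} (h0 : 0 < θ) (h1 : θ < π/4) : Real.sin θ < Real.cos θ := by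
  have := Real.pi_pos
  rw [← Real.sin_pi_div_two_sub θ]
  apply Real.strictMonoOn_sin ⟨by linarith, by linarith⟩ ⟨by linarith, by linarith⟩
  linarith

lemma coslt {θ : ℝ} (h0 : π/4 < θ) (h1 : θ < π/2) : Real.cos θ < Real.sin θ := by
  have := Real.pi_pos
  rw [← Real.sin_pi_div_two_sub θ]
  apply Real.strictMonoOn_sin ⟨by linarith, by linarith⟩ ⟨by linarith, by linarith⟩
  linarith

lemma gg_anti : StrictAntiOn gg (Set.Icc 0 (π/4)) := by
  apply strictAntiOn_of_deriv_neg (convex_Icc _ _) gg_cont.continuousOn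
  intro x hx
  rw [interior_Icc] at hx
  rw [(gg_hasDeriv x).deriv]
  have hπ := Real.pi_pos
  have hs : 0 < Real.sin x := Real.sin_pos_of_pos_of_lt_pi hx.1 (by linarith [hx.2])
  have hc := sinlt hx.1 hx.2
  nlinarith

lemma gg_mono : StrictMonoOn gg (Set.Icc (π/4) (π/2)) := by
  apply strictMonoOn_of_deriv_pos (convex_Icc _ _) gg_cont.continuousOn
  intro x hx
  rw [interior_Icc] at hx
  rw [(gg_hasDeriv x).deriv]
  have hπ := Real.pi_pos
  have hs : 0 < Real.sin x := Real.sin_pos_of_pos_of_lt_pi (by linarith [hx.1]) (by linarith [hx.2])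
  have hc := coslt hx.1 hx.2
  nlinarith

lemma gg_equiv {θ : ℝ} (h : θ ∈ Set.Ioo 0 (π/2)) :
    (1 = θ / (Real.sin θ)^2 - Real.cos θ / Real.sin θ) ↔ gg θ = 0 := by
  have hπ := Real.pi_pos
  have hs : 0 < Real.sin θ := Real.sin_pos_of_pos_of_lt_pi h.1 (by linarith [h.2])
  unfold gg
  rw [div_sub_div _ _ (by positivity) hs.ne', eq_comm, div_eq_one_iff_eq (by positivity)]
  constructor <;> intro heq <;> nlinarith [heq]

theorem stmt_3 : ∃! θmax : ℝ, θmax ∈ Set.Ioo 0 (π/2) ∧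
    1 = θmax / (Real.sin θmax)^2 - Real.cos θmax / Real.sin θmax := by
  have hπ := Real.pi_gt_three
  have hπ4 : Real.pi < 4 := by linarith [Real.pi_lt_d2]
  have hga : gg (π/4) < 0 := by
    unfold gg
    rw [Real.sin_pi_div_four, Real.cos_pi_div_four]
    have h2 : Real.sqrt 2 ^ 2 = 2 := Real.sq_sqrt (by norm_num)
    nlinarith [h2]
  have hgb : 0 < gg (π/2) := by
    unfold gg
    rw [Real.sin_pi_div_two, Real.cos_pi_div_two]
    nlinarith
  -- existence via IVT
  have hsub := intermediate_value_Ioo (a := π/4) (b := π/2) (by linarith) gg_cont.continuousOn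
  have h0 : (0:ℝ) ∈ Set.Ioo (gg (π/4)) (gg (π/2)) := ⟨hga, hgb⟩
  obtain ⟨θ, hθmem, hθ0⟩ := hsub h0
  have hθIoo : θ ∈ Set.Ioo 0 (π/2) := ⟨by linarith [hθmem.1], hθmem.2⟩
  refine ⟨θ, ⟨hθIoo, (gg_equiv hθIoo).mpr hθ0⟩, ?_⟩
  rintro y ⟨hyIoo, hy⟩
  have hy0 : gg y = 0 := (gg_equiv hyIoo).mp hy
  -- any root must lie in (π/4, π/2)
  have key : ∀ z : ℝ, z ∈ Set.Ioo 0 (π/2) → gg z = 0 → π/4 < z := by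
    intro z hz hz0
    by_contra hle
    push_neg at hle
    have : gg z < gg 0 := gg_anti ⟨le_refl 0, by linarith⟩ ⟨hz.1.le, hle⟩ hz.1
    simp only [gg] at this hz0
    simp at this
    linarith
  have hy4 := key y hyIoo hy0
  have hθ4 := key θ hθIoo hθ0
  exact gg_mono.injOn ⟨hy4.le, hyIoo.2.le⟩ ⟨hθ4.le, hθIoo.2.le⟩ (by rw [hy0, hθ0])
end

section
/- Fix a ∈ [0,1) and let θ_max ∈ (0, π/2) satisfy 1 = θ_max/sin²θ_max − cos θ_max/sin θ_max. Then for every t ∈ [a(1−a), (1−a²)/2] there exists a unique θ ∈ [0, θ_max] with A(θ) = t, where A(θ) = (1−a)²θ/(2 sin²θ) − (1−a)²/(2 tan θ) + a(1−a) (with A(0) = a(1−a)). -/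
open Real

noncomputable def Gfun (θ : ℝ) : ℝ :=
  if θ = 0 then 0 else (θ - Real.sin θ * Real.cos θ) / (2 * (Real.sin θ)^2)

lemma Gfun_zero : Gfun 0 = 0 := by simp [Gfun]

lemma Gfun_eq {θ : ℝ} (h : θ ≠ 0) :
    Gfun θ = (θ - Real.sin θ * Real.cos θ) / (2 * (Real.sin θ)^2) := by
  simp [Gfun, h]

lemma sin_pos_of_mem {θmax θ : ℝ} (hθ : θmax ∈ Set.Ioo 0 (π/2))
    (h1 : 0 < θ) (h2 : θ ≤ θmax) : 0 < Real.sin θ :=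
  Real.sin_pos_of_pos_of_lt_pi h1 (lt_of_le_of_lt h2 (lt_trans hθ.2 (by linarith [pi_pos])))

lemma cos_pos_of_mem {θmax θ : ℝ} (hθ : θmax ∈ Set.Ioo 0 (π/2))
    (h1 : 0 < θ) (h2 : θ ≤ θmax) : 0 < Real.cos θ :=
  Real.cos_pos_of_mem_Ioo ⟨by linarith [pi_pos], lt_of_le_of_lt h2 hθ.2⟩

lemma Gfun_bounds {θ : ℝ} (h1 : 0 < θ) (h2 : θ ≤ 1/2) :
    0 ≤ Gfun θ ∧ Gfun θ ≤ θ := by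
  have hs : 0 < Real.sin θ :=
    Real.sin_pos_of_pos_of_lt_pi h1 (by nlinarith [pi_gt_three])
  have hsl : Real.sin θ < θ := Real.sin_lt h1
  have hc1 : Real.cos θ ≤ 1 := Real.cos_le_one θ
  have hcube : θ - θ^3/4 < Real.sin θ := by
    have := Real.sin_gt_sub_cube h1
    nlinarith [pow_pos h1 3]
  have hslo : (15/16 : ℝ) * θ ≤ Real.sin θ := by
    have hθ2 : θ^2 ≤ 1/4 := by nlinarith
    have : θ^3 ≤ θ/4 := by nlinarith
    linarith
  -- numerator bounds
  have hsin2 : Real.sin (2*θ) = 2 * Real.sin θ * Real.cos θ := by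
    rw [Real.sin_two_mul]
  have h2θ : (0:ℝ) < 2*θ := by linarith
  have hnum0 : 0 ≤ θ - Real.sin θ * Real.cos θ := by
    have := Real.sin_lt h2θ
    rw [hsin2] at this; linarith
  have hnum1 : θ - Real.sin θ * Real.cos θ ≤ θ^3 := by
    have := Real.sin_gt_sub_cube h2θ
    rw [hsin2] at this; nlinarith
  rw [Gfun_eq (ne_of_gt h1)]
  constructor
  · positivity
  · rw [div_le_iff₀ (by positivity)]
    have hs2 : (15/16*θ)^2 ≤ (Real.sin θ)^2 := by nlinarith
    have : θ^3 ≤ θ * (2 * (Real.sin θ)^2) := by nlinarith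
    linarith

lemma Gfun_continuousOn {θmax : ℝ} (hθ : θmax ∈ Set.Ioo 0 (π/2)) :
    ContinuousOn Gfun (Set.Icc 0 θmax) := by
  intro x hx
  rcases eq_or_lt_of_le hx.1 with h0 | h0
  · -- x = 0 : squeeze
    subst h0
    rw [ContinuousWithinAt, Gfun_zero]
    apply squeeze_zero' (g := fun θ : ℝ => θ)
    · filter_upwards [self_mem_nhdsWithin,
        eventually_nhdsWithin_of_eventually_nhds
          (Metric.eventually_nhds_iff.2 ⟨1/2, by norm_num, fun {y} hy => hy⟩)]
        with θ hθm hsmall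
      rcases eq_or_lt_of_le hθm.1 with h | h
      · simp [← h, Gfun_zero]
      · have : dist θ 0 < 1/2 := hsmall
        rw [Real.dist_eq, sub_zero, abs_of_pos h] at this
        exact (Gfun_bounds h this.le).1
    · filter_upwards [self_mem_nhdsWithin,
        eventually_nhdsWithin_of_eventually_nhds
          (Metric.eventually_nhds_iff.2 ⟨1/2, by norm_num, fun {y} hy => hy⟩)]
        with θ hθm hsmall
      rcases eq_or_lt_of_le hθm.1 with h | h
      · simp [← h, Gfun_zero]
      · have : dist θ 0 < 1/2 := hsmall
        rw [Real.dist_eq, sub_zero, abs_of_pos h] at this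
        exact (Gfun_bounds h this.le).2
    · exact Filter.tendsto_id.mono_left nhdsWithin_le_nhds
  · -- x > 0
    have hs : Real.sin x ≠ 0 := ne_of_gt (sin_pos_of_mem hθ h0 hx.2)
    have hform : ContinuousAt
        (fun θ => (θ - Real.sin θ * Real.cos θ) / (2 * (Real.sin θ)^2)) x := by
      apply ContinuousAt.div
      · fun_prop
      · fun_prop
      · positivity
    have heq : Gfun =ᶠ[nhds x] fun θ => (θ - Real.sin θ * Real.cos θ) / (2 * (Real.sin θ)^2) := by
      filter_upwards [eventually_ne_nhds (ne_of_gt h0)] with θ hθ0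
      exact Gfun_eq hθ0
    exact (hform.congr heq.symm).continuousWithinAt

lemma Gfun_strictMonoOn {θmax : ℝ} (hθ : θmax ∈ Set.Ioo 0 (π/2)) :
    StrictMonoOn Gfun (Set.Icc 0 θmax) := by
  apply strictMonoOn_of_deriv_pos (convex_Icc 0 θmax) (Gfun_continuousOn hθ)
  intro x hx
  rw [interior_Icc] at hx
  set s := Real.sin x with hsdef
  set c := Real.cos x with hcdef
  have hs : 0 < s := sin_pos_of_mem hθ hx.1 hx.2.le
  have hc : 0 < c := cos_pos_of_mem hθ hx.1 hx.2.le
  have hpyth : s^2 + c^2 = 1 := Real.sin_sq_add_cos_sq x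
  have htan : x * c < s := by
    have := Real.lt_tan hx.1 (lt_trans hx.2 hθ.2)
    rw [Real.tan_eq_sin_div_cos] at this
    calc x * c < (s / c) * c := by exact mul_lt_mul_of_pos_right this hc
    _ = s := by field_simp
  have hu : HasDerivAt (fun θ => θ - Real.sin θ * Real.cos θ)
      (1 - (c * c + Real.sin x * (-s))) x := by
    exact (hasDerivAt_id' x).sub ((Real.hasDerivAt_sin x).mul (Real.hasDerivAt_cos x))
  have hv : HasDerivAt (fun θ => 2 * (Real.sin θ)^2)
      (2 * ((2:ℕ) * s ^ (2-1) * c)) x :=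
    (((Real.hasDerivAt_sin x).pow 2)).const_mul 2
  have hvne : 2 * s^2 ≠ 0 := by positivity
  have hdiv := hu.div hv (by simpa using hvne)
  have heq : Gfun =ᶠ[nhds x]
      fun θ => (θ - Real.sin θ * Real.cos θ) / (2 * (Real.sin θ)^2) := by
    filter_upwards [eventually_ne_nhds (ne_of_gt hx.1)] with θ hθ0
    exact Gfun_eq hθ0
  have hG := hdiv.congr_of_eventuallyEq heq
  rw [hG.deriv]
  apply div_pos
  · have key : 0 < s * (s - x*c) := mul_pos hs (by linarith)
    push_cast
    nlinarith [key, hpyth]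
  · have h2s : (0:ℝ) < 2*s^2 := by nlinarith
    exact pow_pos h2s 2

theorem stmt_6 (a : ℝ) (ha : a ∈ Set.Ico (0:ℝ) 1)
    (θmax : ℝ) (hθ : θmax ∈ Set.Ioo 0 (π/2))
    (hmax : 1 = θmax / (Real.sin θmax)^2 - Real.cos θmax / Real.sin θmax)
    (A : ℝ → ℝ)
    (hA0 : A 0 = a * (1 - a))
    (hA : ∀ θ ∈ Set.Ioo 0 (π/2),
      A θ = (1-a)^2 * θ / (2 * (Real.sin θ)^2) - (1-a)^2 / (2 * Real.tan θ) + a * (1-a)) :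
    ∀ t ∈ Set.Icc (a * (1-a)) ((1 - a^2)/2),
      ∃! θ : ℝ, θ ∈ Set.Icc 0 θmax ∧ A θ = t := by
  intro t ht
  set Φ : ℝ → ℝ := fun θ => (1-a)^2 * Gfun θ + a * (1-a) with hΦdef
  have hA' : ∀ θ ∈ Set.Icc 0 θmax, A θ = Φ θ := by
    intro θ hθm
    rcases eq_or_lt_of_le hθm.1 with h0 | h0
    · rw [← h0, hA0, hΦdef]; simp [Gfun_zero]
    · have hθIoo : θ ∈ Set.Ioo 0 (π/2) := ⟨h0, lt_of_le_of_lt hθm.2 hθ.2⟩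
      have hs : 0 < Real.sin θ := sin_pos_of_mem hθ h0 hθm.2
      have hc : 0 < Real.cos θ := cos_pos_of_mem hθ h0 hθm.2
      rw [hA θ hθIoo]
      simp only [hΦdef, Gfun_eq (ne_of_gt h0), Real.tan_eq_sin_div_cos]
      field_simp
  have hGmax : Gfun θmax = 1/2 := by
    have hs : 0 < Real.sin θmax := sin_pos_of_mem hθ hθ.1 le_rfl
    have hs' : Real.sin θmax ≠ 0 := ne_of_gt hs
    have hkey : θmax - Real.sin θmax * Real.cos θmax = (Real.sin θmax)^2 := by
      field_simp at hmax
      nlinarith [hmax]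
    rw [Gfun_eq (ne_of_gt hθ.1), hkey]
    field_simp
  have h1a : 0 < (1-a)^2 := pow_pos (by linarith [ha.2]) 2
  have hΦmono : StrictMonoOn Φ (Set.Icc 0 θmax) := by
    intro x hx y hy hxy
    have := Gfun_strictMonoOn hθ hx hy hxy
    simp only [hΦdef]
    nlinarith
  have hΦcont : ContinuousOn Φ (Set.Icc 0 θmax) :=
    (continuousOn_const.mul (Gfun_continuousOn hθ)).add continuousOn_const
  have hΦ0 : Φ 0 = a * (1-a) := by simp [hΦdef, Gfun_zero]
  have hΦmax : Φ θmax = (1 - a^2)/2 := by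
    rw [hΦdef]; simp only [hGmax]; ring
  have hmem : t ∈ Set.Icc (Φ 0) (Φ θmax) := by rw [hΦ0, hΦmax]; exact ht
  obtain ⟨θ, hθm, hΦθ⟩ := intermediate_value_Icc hθ.1.le hΦcont hmem
  refine ⟨θ, ⟨hθm, by rw [hA' θ hθm, hΦθ]⟩, ?_⟩
  rintro y ⟨hym, hAy⟩
  apply hΦmono.injOn hym hθm
  rw [hΦθ, ← hAy, hA' y hym]
end

section
/- Let θ_max ∈ (0, π/2) satisfy 1 = θ_max/sin²θ_max − cos θ_max/sin θ_max. Then θ_max > π/4, and consequently θ_max/sin θ_max < √2. Hence for every a ∈ [0,1) and θ ∈ (0, θ_max], the perimeter P(S₄(a,θ)) = (1−a)θ/sin θ is strictly less than √2(1−a). -/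
open Real

theorem stmt_10 (θmax : ℝ) (hθ : θmax ∈ Set.Ioo 0 (π/2))
    (hmax : 1 = θmax / (Real.sin θmax)^2 - Real.cos θmax / Real.sin θmax) :
    π/4 < θmax ∧ θmax / Real.sin θmax < Real.sqrt 2 ∧
    ∀ a ∈ Set.Ico (0:ℝ) 1, ∀ θ ∈ Set.Ioc 0 θmax,
      (1-a) * θ / Real.sin θ < Real.sqrt 2 * (1-a) := by
  obtain ⟨h0, h2⟩ := hθ
  have hπ : θmax < π := lt_trans h2 (by linarith [pi_pos])
  have hs : 0 < Real.sin θmax := Real.sin_pos_of_pos_of_lt_pi h0 hπ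
  have hc : 0 < Real.cos θmax := Real.cos_pos_of_mem_Ioo ⟨by linarith [pi_pos], h2⟩
  have hkey : θmax = Real.sin θmax ^ 2 + Real.sin θmax * Real.cos θmax := by
    field_simp at hmax
    nlinarith [hmax]
  have hsc : Real.sin θmax ^ 2 + Real.cos θmax ^ 2 = 1 := Real.sin_sq_add_cos_sq θmax
  -- θmax > π/4
  have hpi4 : π / 4 < θmax := by
    by_contra h
    push_neg at h
    have h786 : θmax ≤ 0.7854 := by nlinarith [pi_lt_d6]
    have h1 : θmax ≤ 1 := by linarith
    have hsin : θmax - θmax ^ 3 / 4 < Real.sin θmax := by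
      have := Real.sin_gt_sub_cube h0; nlinarith [pow_pos h0 3]
    have hcos := Real.one_sub_sq_div_two_lt_cos (x := θmax) (ne_of_gt h0)
    have hcube : 0 < θmax - θmax ^ 3 / 4 := by nlinarith
    have hfac : (θmax - θmax ^ 3 / 4) * ((θmax - θmax ^ 3 / 4) + (1 - θmax ^ 2 / 2))
        < Real.sin θmax * (Real.sin θmax + Real.cos θmax) := by
      apply mul_lt_mul' hsin.le _ (by nlinarith) hs
      · linarith
    have hpoly : θmax < (θmax - θmax ^ 3 / 4) * ((θmax - θmax ^ 3 / 4) + (1 - θmax ^ 2 / 2)) := by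
      nlinarith [sq_nonneg θmax, sq_nonneg (θmax^2), pow_pos h0 3, pow_pos h0 5]
    nlinarith [hfac, hpoly]
  -- sin ≠ cos
  have hne : Real.sin θmax ≠ Real.cos θmax := by
    intro he
    have hsq : Real.sin θmax ^ 2 = 1/2 := by nlinarith
    have h1 : θmax = 1 := by rw [hkey, ← he]; nlinarith
    have hgt : Real.cos θmax < Real.sin θmax := by
      rw [h1, ← Real.cos_pi_div_two_sub]
      apply Real.cos_lt_cos_of_nonneg_of_le_pi (by nlinarith [pi_gt_d6]) (by nlinarith [pi_gt_d6])
      nlinarith [pi_lt_d6]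
    rw [he] at hgt; exact lt_irrefl _ hgt
  have hmain : θmax / Real.sin θmax < Real.sqrt 2 := by
    have h2sc : 2 * (Real.sin θmax * Real.cos θmax) < 1 := by
      nlinarith [sq_pos_of_ne_zero (sub_ne_zero.mpr hne)]
    have hsum : Real.sin θmax + Real.cos θmax < Real.sqrt 2 := by
      have := (Real.lt_sqrt (by positivity : (0:ℝ) ≤ Real.sin θmax + Real.cos θmax)).mpr
        (show (Real.sin θmax + Real.cos θmax)^2 < 2 by nlinarith)
      exact this
    calc θmax / Real.sin θmax = Real.sin θmax + Real.cos θmax := by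
          rw [div_eq_iff hs.ne']; linear_combination hkey
      _ < Real.sqrt 2 := hsum
  refine ⟨hpi4, hmain, ?_⟩
  rintro a ⟨ha0, ha1⟩ θ ⟨hθ0, hθm⟩
  have h1a : 0 < 1 - a := by linarith
  have hsθ : 0 < Real.sin θ := Real.sin_pos_of_pos_of_lt_pi hθ0 (lt_of_le_of_lt hθm hπ)
  have hθratio : θ / Real.sin θ < Real.sqrt 2 := by
    rcases eq_or_lt_of_le hθm with he | hlt
    · rwa [he]
    · set t := θ / θmax with ht
      have ht0 : 0 < t := div_pos hθ0 h0
      have ht1 : t < 1 := (div_lt_one h0).mpr hlt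
      have htθ : t * θmax = θ := div_mul_cancel₀ θ h0.ne'
      have hconc := strictConcaveOn_sin_Icc.2 (Set.mem_Icc.mpr ⟨le_refl 0, Real.pi_pos.le⟩)
        (Set.mem_Icc.mpr ⟨h0.le, hπ.le⟩) h0.ne (by linarith : (0:ℝ) < 1 - t) ht0 (by ring)
      rw [smul_zero, Real.sin_zero, smul_zero, zero_add, zero_add, smul_eq_mul, smul_eq_mul,
        htθ] at hconc
      have : θ / Real.sin θ < θmax / Real.sin θmax := by
        rw [div_lt_div_iff₀ hsθ hs]
        have h' : θ * Real.sin θmax = θmax * (t * Real.sin θmax) := by rw [← htθ]; ring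
        linarith [mul_lt_mul_of_pos_left hconc h0]
      linarith
  have heq : (1-a) * θ / Real.sin θ = (1-a) * (θ / Real.sin θ) := by ring
  rw [heq]
  calc (1-a) * (θ / Real.sin θ) < (1-a) * Real.sqrt 2 := mul_lt_mul_of_pos_left hθratio h1a
    _ = Real.sqrt 2 * (1-a) := by ring
end

section
/- Suppose a circular arc of radius r subtends an angle θ ∈ [π/2, π] at its center, so that the enclosed circular-segment area is t = (1/2) r² θ − (1/2) r² cos θ sin θ and the arc length is P = r θ. Then P ≥ √(π t); equivalently θ² ≥ (π/2)θ − (π/2) cos θ sin θ for all θ ∈ [π/2, π]. -/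
open Real

theorem stmt_11 (r : ℝ) (hr : 0 < r) (θ : ℝ) (hθ : θ ∈ Set.Icc (π/2) π) :
    r * θ ≥ Real.sqrt (π * ((1/2) * r^2 * θ - (1/2) * r^2 * Real.cos θ * Real.sin θ)) ∧
    θ^2 ≥ (π/2) * θ - (π/2) * Real.cos θ * Real.sin θ := by
  obtain ⟨h1, h2⟩ := hθ
  have hπ : (0:ℝ) < π := Real.pi_pos
  have hθ0 : 0 < θ := lt_of_lt_of_le (by positivity) h1
  have hs : Real.sin (2*θ - π) ≤ 2*θ - π := Real.sin_le (by linarith)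
  have hsin : Real.sin (2*θ - π) = - Real.sin (2*θ) := by
    rw [Real.sin_sub]; simp
  have hdouble : Real.sin (2*θ) = 2 * Real.sin θ * Real.cos θ := Real.sin_two_mul θ
  have key : θ^2 ≥ (π/2) * θ - (π/2) * Real.cos θ * Real.sin θ := by
    nlinarith [sq_nonneg (θ - π/2)]
  refine ⟨?_, key⟩
  have hsq : π * ((1/2) * r^2 * θ - (1/2) * r^2 * Real.cos θ * Real.sin θ) ≤ (r*θ)^2 := by
    nlinarith [sq_nonneg r, sq_nonneg (r*θ)]
  calc Real.sqrt (π * ((1/2) * r^2 * θ - (1/2) * r^2 * Real.cos θ * Real.sin θ))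
      ≤ Real.sqrt ((r*θ)^2) := Real.sqrt_le_sqrt hsq
    _ = r*θ := Real.sqrt_sq (by positivity)
end

section
/- Define t(θ) = (−2 sin²θ + (2θ − cos θ) sin θ + θ)/(2θ²) for θ ∈ (0, π/2). Then t'(θ) = (cos θ + 2 sin θ − θ)(sin θ − θ cos θ)/θ³, and both factors in the numerator are positive on (0, θ_max] where θ_max < π/2 is the solution of 1 = θ/sin²θ − cos θ/sin θ; hence t is strictly increasing on (0, θ_max]. -/
open Real

theorem stmt_14 (θmax : ℝ) (hθ : θmax ∈ Set.Ioo 0 (π/2))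
    (hmax : 1 = θmax / (Real.sin θmax)^2 - Real.cos θmax / Real.sin θmax)
    (t : ℝ → ℝ)
    (ht : ∀ θ ∈ Set.Ioo 0 (π/2),
      t θ = (-2 * (Real.sin θ)^2 + (2*θ - Real.cos θ) * Real.sin θ + θ) / (2 * θ^2)) :
    (∀ θ ∈ Set.Ioo 0 (π/2),
      deriv t θ = (Real.cos θ + 2 * Real.sin θ - θ) * (Real.sin θ - θ * Real.cos θ) / θ^3) ∧
    (∀ θ ∈ Set.Ioc 0 θmax,
      0 < Real.cos θ + 2 * Real.sin θ - θ ∧ 0 < Real.sin θ - θ * Real.cos θ) ∧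
    StrictMonoOn t (Set.Ioc 0 θmax) := by
  obtain ⟨hm0, hm2⟩ := hθ
  set f : ℝ → ℝ := fun θ => (-2 * (Real.sin θ)^2 + (2*θ - Real.cos θ) * Real.sin θ + θ) / (2 * θ^2) with hf
  have hderiv : ∀ x ∈ Set.Ioo (0:ℝ) (π/2),
      deriv t x = (Real.cos x + 2 * Real.sin x - x) * (Real.sin x - x * Real.cos x) / x^3 := by
    intro x hx
    have hx0 : x ≠ 0 := ne_of_gt hx.1
    have heq : t =ᶠ[nhds x] f := by
      filter_upwards [isOpen_Ioo.mem_nhds hx] with y hy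
      exact ht y hy
    have hs := Real.hasDerivAt_sin x
    have hc := Real.hasDerivAt_cos x
    have hsq : HasDerivAt (fun θ : ℝ => Real.sin θ ^ 2) (2 * Real.sin x ^ 1 * Real.cos x) x :=
      hs.pow 2
    have hid : HasDerivAt (fun θ : ℝ => θ) (1:ℝ) x := hasDerivAt_id x
    have hnum : HasDerivAt (fun θ : ℝ => -2 * (Real.sin θ)^2 + (2*θ - Real.cos θ) * Real.sin θ + θ)
        (-2 * (2 * Real.sin x ^ 1 * Real.cos x) +
          ((2 * 1 - (-Real.sin x)) * Real.sin x + (2*x - Real.cos x) * Real.cos x) + 1) x := by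
      exact (((hsq.const_mul (-2)).add
        (((hid.const_mul 2).sub hc).mul hs)).add hid)
    have hden : HasDerivAt (fun θ : ℝ => 2 * θ^2) (2 * (2 * x ^ 1)) x := by
      simpa using ((hasDerivAt_pow 2 x).const_mul 2)
    have hden0 : 2 * x^2 ≠ 0 := by positivity
    have hfd : HasDerivAt f
        (((-2 * (2 * Real.sin x ^ 1 * Real.cos x) +
          ((2 * 1 - (-Real.sin x)) * Real.sin x + (2*x - Real.cos x) * Real.cos x) + 1) * (2 * x^2)
          - (-2 * (Real.sin x)^2 + (2*x - Real.cos x) * Real.sin x + x) * (2 * (2 * x ^ 1)))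
          / (2 * x^2)^2) x := hnum.div hden hden0
    rw [heq.deriv_eq, hfd.deriv]
    have hpy := Real.sin_sq_add_cos_sq x
    field_simp
    linear_combination x * hpy
  have hpos : ∀ x ∈ Set.Ioc (0:ℝ) θmax,
      0 < Real.cos x + 2 * Real.sin x - x ∧ 0 < Real.sin x - x * Real.cos x := by
    intro x hx
    have hx0 : 0 < x := hx.1
    have hx2 : x < π/2 := lt_of_le_of_lt hx.2 hm2
    have hcos : 0 < Real.cos x := Real.cos_pos_of_mem_Ioo ⟨by linarith [Real.pi_pos], hx2⟩
    constructor
    · have hjs : 2/π * x ≤ Real.sin x := Real.mul_le_sin hx0.le hx2.le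
      have hπ : 0 < π := Real.pi_pos
      have hπ4 : π < 4 := by linarith [Real.pi_lt_d2]
      have : x < 2 * (2/π * x) := by
        rw [div_mul_eq_mul_div, ← mul_div_assoc]
        rw [lt_div_iff₀ hπ]
        nlinarith
      nlinarith
    · have htan : x < Real.tan x := Real.lt_tan hx0 hx2
      have := Real.tan_eq_sin_div_cos x
      rw [this, lt_div_iff₀ hcos] at htan
      nlinarith
  refine ⟨hderiv, hpos, ?_⟩
  have hsub : Set.Ioc (0:ℝ) θmax ⊆ Set.Ioo 0 (π/2) := fun y hy =>
    ⟨hy.1, lt_of_le_of_lt hy.2 hm2⟩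
  have hcont : ContinuousOn t (Set.Ioc 0 θmax) := by
    have hfc : ContinuousOn f (Set.Ioc 0 θmax) := by
      apply ContinuousOn.div
      · fun_prop
      · fun_prop
      · intro y hy
        exact mul_ne_zero two_ne_zero (pow_ne_zero 2 (ne_of_gt hy.1))
    exact hfc.congr fun y hy => ht y (hsub hy)
  apply strictMonoOn_of_deriv_pos (convex_Ioc 0 θmax) hcont
  intro x hx
  rw [interior_Ioc] at hx
  have hx' : x ∈ Set.Ioc (0:ℝ) θmax := ⟨hx.1, hx.2.le⟩
  rw [hderiv x (hsub hx')]
  obtain ⟨h1, h2⟩ := hpos x hx'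
  have h3 : (0:ℝ) < x^3 := pow_pos hx.1 3
  exact div_pos (mul_pos h1 h2) h3
end

section
/- Fix a ∈ [0,1) and define j(θ) = (1/(1−a))(P(θ)² − π A(θ)) where P(θ) = (1−a)θ/sin θ and A(θ) = (1−a)²θ/(2 sin²θ) − (1−a)²/(2 tan θ) + a(1−a). Then dj/dθ = (1−a)(π − 2θ)(θ cot θ − 1) csc²θ, which is nonzero for all θ ∈ (0, π/2) with θ ≠ π/2; in particular, restricted to (0, π/2), j is strictly monotone (strictly decreasing). -/
open Real

theorem stmt_16 (a : ℝ) (ha : a ∈ Set.Ico (0:ℝ) 1) (P A j : ℝ → ℝ)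
    (hP : ∀ θ ∈ Set.Ioo 0 (π/2), P θ = (1-a) * θ / Real.sin θ)
    (hA : ∀ θ ∈ Set.Ioo 0 (π/2),
      A θ = (1-a)^2 * θ / (2 * (Real.sin θ)^2) - (1-a)^2 / (2 * Real.tan θ) + a * (1-a))
    (hj : ∀ θ ∈ Set.Ioo 0 (π/2), j θ = (1/(1-a)) * ((P θ)^2 - π * A θ)) :
    (∀ θ ∈ Set.Ioo 0 (π/2),
      deriv j θ =
        (1-a) * (π - 2*θ) * (θ * (Real.cos θ / Real.sin θ) - 1) * (1 / Real.sin θ)^2 ∧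
      (θ ≠ π/2 → deriv j θ ≠ 0)) ∧
    StrictAntiOn j (Set.Ioo 0 (π/2)) := by
  obtain ⟨ha0, ha1⟩ := ha
  have h1a : (0:ℝ) < 1 - a := by linarith
  have hpi := Real.pi_pos
  set g : ℝ → ℝ := fun θ =>
    (1-a) * ((θ^2 - π*θ/2) / (Real.sin θ)^2 + (π/2) * (Real.cos θ / Real.sin θ)) - π*a with hg
  have hsin : ∀ θ ∈ Set.Ioo 0 (π/2), 0 < Real.sin θ := fun θ hθ =>
    Real.sin_pos_of_pos_of_lt_pi hθ.1 (by linarith [hθ.2])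
  have hcos : ∀ θ ∈ Set.Ioo 0 (π/2), 0 < Real.cos θ := fun θ hθ =>
    Real.cos_pos_of_mem_Ioo ⟨by linarith [hθ.1], hθ.2⟩
  have hjg : ∀ θ ∈ Set.Ioo 0 (π/2), j θ = g θ := by
    intro θ hθ
    have hs := (hsin θ hθ).ne'
    have hc := (hcos θ hθ).ne'
    rw [hj θ hθ, hP θ hθ, hA θ hθ, hg]
    rw [Real.tan_eq_sin_div_cos]
    field_simp
    ring
  have key : ∀ θ ∈ Set.Ioo 0 (π/2), HasDerivAt g
      ((1-a) * (π - 2*θ) * (θ * (Real.cos θ / Real.sin θ) - 1) * (1 / Real.sin θ)^2) θ := by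
    intro θ hθ
    have hs := hsin θ hθ
    have hsne := hs.ne'
    have h1 : HasDerivAt (fun x:ℝ => x^2 - π*x/2) (2*θ - π/2) θ := by
      have := ((hasDerivAt_pow 2 θ).sub (((hasDerivAt_id θ).const_mul π).div_const 2))
      simp at this ⊢; exact this
    have hs2 : HasDerivAt (fun x:ℝ => (Real.sin x)^2) (2 * Real.sin θ * Real.cos θ) θ := by
      have := (Real.hasDerivAt_sin θ).pow 2
      simp [mul_comm, mul_assoc, mul_left_comm] at this ⊢; exact this
    have hq : HasDerivAt (fun x:ℝ => (x^2 - π*x/2) / (Real.sin x)^2)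
        (((2*θ - π/2) * (Real.sin θ)^2 - (θ^2 - π*θ/2) * (2 * Real.sin θ * Real.cos θ))
          / ((Real.sin θ)^2)^2) θ :=
      h1.div hs2 (pow_ne_zero 2 hsne)
    have hcot : HasDerivAt (fun x:ℝ => Real.cos x / Real.sin x)
        ((-Real.sin θ * Real.sin θ - Real.cos θ * Real.cos θ) / (Real.sin θ)^2) θ :=
      (Real.hasDerivAt_cos θ).div (Real.hasDerivAt_sin θ) hsne
    have hcot' : HasDerivAt (fun x:ℝ => Real.cos x / Real.sin x) (-1 / (Real.sin θ)^2) θ := by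
      convert hcot using 1
      have h1 : Real.sin θ ^ 2 + Real.cos θ ^ 2 = 1 := Real.sin_sq_add_cos_sq θ
      field_simp
      linarith [h1]
    have hsum := ((hq.add (hcot'.const_mul (π/2))).const_mul (1-a)).sub_const (π*a)
    refine HasDerivAt.congr_deriv hsum ?_
    field_simp
    ring
  have hjd : ∀ θ ∈ Set.Ioo 0 (π/2), HasDerivAt j
      ((1-a) * (π - 2*θ) * (θ * (Real.cos θ / Real.sin θ) - 1) * (1 / Real.sin θ)^2) θ := by
    intro θ hθ
    refine (key θ hθ).congr_of_eventuallyEq ?_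
    filter_upwards [isOpen_Ioo.mem_nhds hθ] with x hx
    exact hjg x hx
  have hneg : ∀ θ ∈ Set.Ioo 0 (π/2),
      (1-a) * (π - 2*θ) * (θ * (Real.cos θ / Real.sin θ) - 1) * (1 / Real.sin θ)^2 < 0 := by
    intro θ hθ
    have hs := hsin θ hθ
    have hc := hcos θ hθ
    have htan : θ < Real.tan θ := Real.lt_tan hθ.1 hθ.2
    have h3 : θ * (Real.cos θ / Real.sin θ) - 1 < 0 := by
      have hlt : θ * Real.cos θ < Real.sin θ := by
        rw [Real.tan_eq_sin_div_cos] at htan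
        calc θ * Real.cos θ < (Real.sin θ / Real.cos θ) * Real.cos θ := by nlinarith
          _ = Real.sin θ := by field_simp
      rw [sub_neg, mul_div_assoc']
      exact (div_lt_one hs).mpr hlt
    have h2 : 0 < π - 2*θ := by linarith [hθ.2]
    have h4 : (0:ℝ) < (1 / Real.sin θ)^2 := by positivity
    exact mul_neg_of_neg_of_pos (mul_neg_of_pos_of_neg (mul_pos h1a h2) h3) h4
  constructor
  · intro θ hθ
    have hd := (hjd θ hθ).deriv
    refine ⟨hd, fun _ => ?_⟩
    rw [hd]
    exact ne_of_lt (hneg θ hθ)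
  · apply strictAntiOn_of_deriv_neg (convex_Ioo _ _)
    · intro x hx
      exact ((hjd x hx).differentiableAt).continuousAt.continuousWithinAt
    · intro x hx
      rw [interior_Ioo] at hx
      rw [(hjd x hx).deriv]
      exact hneg x hx
end
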